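/- Let C₁ be the [t, t−u, 3] Hamming code over F_{q^m} with t = (q^{mu} − 1)/(q^m − 1), and C₂ the trivial [t, t−1, 2] code over F_{q^m}. Then the sum-rank code SR(C₁, C₂) of matrix size 2 × m has covering radius at most 2 in the sum-rank metric. -/
import Mathlib


/-- Let `t = (q^{mu} − 1)/(q^m − 1)`, `C₁` the `[t, t−u, 3]` Hamming code over `F_{q^m}`
(a perfect code, with covering radius `1`), and `C₂` the trivial `[t, t−1, 2]` code
(the parity-check code).  Then the sum-rank code `SR(C₁, C₂)` of matrix size `2 × m`
has sum-rank covering radius at most `2`; the blocks are the `F_q`-linear maps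
`x ↦ c₁ᵢ φ(x) + c₂ᵢ φ(x^q)` from `F_{q²}` to `F_{q^m}`, whose rank is the
`F_q`-dimension of (the span of) their range. -/
theorem sr_hamming_quasi_perfect (q m u t : ℕ) (hm : 2 ≤ m) (hu : 0 < u)
    (Fq K Fq2 : Type) [Field Fq] [Fintype Fq] [Field K] [Fintype K] [DecidableEq K]
    [Field Fq2] [Fintype Fq2] [Algebra Fq K] [Algebra Fq Fq2]
    (hq : ∃ p k : ℕ, p.Prime ∧ 0 < k ∧ q = p ^ k)
    (hcq : Fintype.card Fq = q) (hcK : Fintype.card K = q ^ m)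
    (hcq2 : Fintype.card Fq2 = q ^ 2)
    (ht : t = (q ^ (m * u) - 1) / (q ^ m - 1))
    (φ : Fq2 →ₗ[Fq] K) (hφ : Function.Injective φ)
    (C₁ : Submodule K (Fin t → K))
    (hC₁k : Module.finrank K C₁ = t - u)
    (hC₁d : ∀ c ∈ C₁, c ≠ 0 → 3 ≤ hammingNorm c)
    (hC₁cov : ∀ x : Fin t → K, ∃ c ∈ C₁, hammingDist x c ≤ 1) :
    ∀ v₁ v₂ : Fin t → K,
      ∃ c₁ ∈ C₁, ∃ c₂ ∈ {x : Fin t → K | ∑ i, x i = 0},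
        ∑ i : Fin t, Module.finrank Fq (Submodule.span Fq
          (Set.range fun x : Fq2 =>
            (v₁ i - c₁ i) * φ x + (v₂ i - c₂ i) * φ (x ^ q))) ≤ 2 := by
  intro v₁ v₂
  obtain ⟨p, k, hp, hk, hqpk⟩ := hq
  haveI : Fact p.Prime := ⟨hp⟩
  have hq2 : 2 ≤ q := by
    subst hqpk
    calc 2 ≤ p := hp.two_le
    _ ≤ p ^ k := Nat.le_self_pow hk.ne' p
  -- `Fq2` has characteristic `p`
  haveI hcharFq2 : CharP Fq2 p := by
    obtain ⟨p', hp'⟩ := CharP.exists Fq2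
    haveI := hp'
    have hp'prime : p'.Prime := CharP.char_is_prime Fq2 p'
    obtain ⟨n, -, hcard⟩ := FiniteField.card Fq2 p'
    have h1 : p' ^ (n : ℕ) = p ^ (2 * k) := by
      rw [← hcard, hcq2, hqpk, ← pow_mul, mul_comm]
    have hdvd : p' ∣ p ^ (2 * k) := by
      rw [← h1]
      exact dvd_pow_self p' n.pos.ne'
    have : p' = p := by
      have := hp'prime.dvd_of_dvd_pow hdvd
      exact (Nat.prime_dvd_prime_iff_eq hp'prime hp).mp this
    rwa [this] at hp'
  -- Frobenius `x ↦ x ^ q` is additive and `Fq`-semilinear (in fact linear)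
  have hadd : ∀ x y : Fq2, (x + y) ^ q = x ^ q + y ^ q := by
    intro x y; rw [hqpk]; exact add_pow_char_pow x y p k
  have hsmul : ∀ (s : Fq) (x : Fq2), (s • x) ^ q = s • x ^ q := by
    intro s x
    rw [smul_pow]
    congr 1
    calc s ^ q = s ^ Fintype.card Fq := by rw [hcq]
    _ = s := FiniteField.pow_card s
  haveI : FiniteDimensional Fq Fq2 := Module.Finite.of_finite
  have hfr2 : Module.finrank Fq Fq2 = 2 := by
    have h := Module.card_eq_pow_finrank (K := Fq) (V := Fq2)
    rw [hcq, hcq2] at h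
    exact (Nat.pow_right_injective hq2 h.symm)
  -- key rank bound for a single block
  have key : ∀ a b : K, Module.finrank Fq (Submodule.span Fq
      (Set.range fun x : Fq2 => a * φ x + b * φ (x ^ q))) ≤ 2 := by
    intro a b
    let L : Fq2 →ₗ[Fq] K :=
      { toFun := fun x => a * φ x + b * φ (x ^ q)
        map_add' := by
          intro x y
          show a * φ (x + y) + b * φ ((x + y) ^ q) =
            (a * φ x + b * φ (x ^ q)) + (a * φ y + b * φ (y ^ q))
          rw [hadd, map_add, map_add]
          ring
        map_smul' := by
          intro s x
          simp only [hsmul, map_smul, RingHom.id_apply, smul_add, mul_smul_comm] }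
    have hspan : Submodule.span Fq
        (Set.range fun x : Fq2 => a * φ x + b * φ (x ^ q)) = LinearMap.range L := by
      have hL : (fun x : Fq2 => a * φ x + b * φ (x ^ q)) = ⇑L := rfl
      rw [hL, ← LinearMap.coe_range]
      exact Submodule.span_eq _
    rw [hspan]
    calc Module.finrank Fq (LinearMap.range L) ≤ Module.finrank Fq Fq2 :=
          LinearMap.finrank_range_le L
    _ = 2 := hfr2
  -- choose `c₁`
  obtain ⟨c₁, hc₁, hdist⟩ := hC₁cov v₁
  rcases Nat.eq_zero_or_pos t with ht0 | ht0
  · subst ht0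
    exact ⟨c₁, hc₁, v₂, by simp, by simp⟩
  -- choose a position `j` containing the support of `v₁ - c₁`
  have hj : ∃ j : Fin t, ∀ i, i ≠ j → v₁ i = c₁ i := by
    by_cases h : ∀ i, v₁ i = c₁ i
    · exact ⟨⟨0, ht0⟩, fun i _ => h i⟩
    · push_neg at h
      obtain ⟨j, hjne⟩ := h
      refine ⟨j, fun i hi => ?_⟩
      by_contra hne
      have hsub : ({i, j} : Finset (Fin t)) ⊆
          Finset.univ.filter (fun l => v₁ l ≠ c₁ l) := by
        intro l hl
        simp only [Finset.mem_insert, Finset.mem_singleton] at hl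
        rcases hl with rfl | rfl
        · simp [hne]
        · simp [hjne]
      have hcard : ({i, j} : Finset (Fin t)).card = 2 := by
        rw [Finset.card_insert_of_notMem (by simpa using hi), Finset.card_singleton]
      have hDeq : hammingDist v₁ c₁ =
          (Finset.univ.filter fun l => v₁ l ≠ c₁ l).card := rfl
      have h2 : 2 ≤ hammingDist v₁ c₁ := by
        rw [hDeq, ← hcard]
        exact Finset.card_le_card hsub
      omega
  obtain ⟨j, hj⟩ := hj
  -- choose `c₂` in the parity-check code agreeing with `v₂` off `j`
  set c₂ : Fin t → K := Function.update v₂ j (v₂ j - ∑ i, v₂ i) with hc₂def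
  have hc₂mem : ∑ i, c₂ i = 0 := by
    rw [hc₂def, Finset.sum_update_of_mem (Finset.mem_univ j), ← Finset.erase_eq,
      Finset.sum_erase_eq_sub (Finset.mem_univ j)]
    ring
  refine ⟨c₁, hc₁, c₂, hc₂mem, ?_⟩
  rw [Finset.sum_eq_single_of_mem j (Finset.mem_univ j) ?_]
  · exact key _ _
  · intro i _ hi
    have h1 : v₁ i - c₁ i = 0 := by rw [hj i hi, sub_self]
    have h2 : v₂ i - c₂ i = 0 := by
      rw [hc₂def, Function.update_of_ne hi, sub_self]
    simp [h1, h2]
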